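/- Let G be a finite p-group with p odd such that G' is cyclic. Then the set of centralizers {C_G(H) : H ≤ G} equals the set of subgroups of G containing Z(G), and CD(G) equals the set of all subgroups of G containing Z(G). -/

import Mathlib

noncomputable def mCD {G : Type*} [Group G] (H : Subgroup G) : ℕ :=
  Nat.card H * Nat.card (Subgroup.centralizer (H : Set G))

noncomputable def mStar (G : Type*) [Group G] : ℕ :=
  sSup (Set.range fun H : Subgroup G => mCD H)

noncomputable def CD (G : Type*) [Group G] : Set (Subgroup G) :=
  {H | mCD H = mStar G}

noncomputable def deltaCD (G : Type*) [Group G] : ℕ :=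
  Nat.card {H : Subgroup G // H ∉ CD G}

open Subgroup Finset
open scoped commutatorElement

set_option linter.unusedSectionVars false
set_option linter.unusedVariables false



lemma nt_binom (p t : ℕ) : ∀ i : ℕ, (1 + p * t) ^ i ≡ 1 + i * (p * t) [MOD p ^ 2] := by
  intro i
  induction i with
  | zero => simp [Nat.ModEq.refl]
  | succ i ih =>
    have h2 : (1 + p * t) ^ i * (1 + p * t) ≡ (1 + i * (p*t)) * (1 + p * t) [MOD p ^ 2] :=
      ih.mul_right _
    have h3 : (1 + i * (p*t)) * (1 + p * t) = 1 + (i+1) * (p*t) + (p*t)*(i*(p*t)) := by ring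
    have h4 : (p : ℕ) ^ 2 ∣ (p*t)*(i*(p*t)) := ⟨t*(i*t), by ring⟩
    calc (1 + p * t) ^ (i+1) = (1 + p * t) ^ i * (1 + p * t) := pow_succ _ _
      _ ≡ (1 + i * (p*t)) * (1 + p * t) [MOD p ^ 2] := h2
      _ = 1 + (i+1) * (p*t) + (p*t)*(i*(p*t)) := h3
      _ ≡ 1 + (i+1) * (p*t) + 0 [MOD p ^ 2] := Nat.ModEq.add_left _ ((Nat.modEq_zero_iff_dvd).mpr h4)
      _ = 1 + (i+1) * (p*t) := by ring

lemma modeq_sum {n : ℕ} {s : Finset ℕ} {f g : ℕ → ℕ} (h : ∀ i ∈ s, f i ≡ g i [MOD n]) :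
    (∑ i ∈ s, f i) ≡ (∑ i ∈ s, g i) [MOD n] := by
  classical
  induction s using Finset.induction with
  | empty => simp [Nat.ModEq.refl]
  | @insert a s' hx ih =>
    rw [Finset.sum_insert hx, Finset.sum_insert hx]
    exact (h a (Finset.mem_insert_self a s')).add (ih fun i hi => h i (Finset.mem_insert_of_mem hi))

lemma nt_sum_sq {p : ℕ} (hp : p.Prime) (hodd : Odd p) (t : ℕ) :
    (∑ i ∈ range p, (1 + p * t) ^ i) ≡ p [MOD p ^ 2] := by
  have h1 : (∑ i ∈ range p, (1 + p * t) ^ i) ≡ (∑ i ∈ range p, (1 + i * (p * t))) [MOD p ^ 2] :=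
    modeq_sum fun i _ => nt_binom p t i
  have hgauss : (∑ i ∈ range p, i) = p * ((p-1)/2) := by
    have h2 : (∑ i ∈ range p, i) * 2 = p * (p - 1) := Finset.sum_range_id_mul_two p
    have heven : 2 ∣ p - 1 := by
      obtain ⟨k, hk⟩ := hodd
      omega
    obtain ⟨k, hk⟩ := heven
    rw [hk] at h2 ⊢
    have h5 : 2*k/2 = k := by omega
    rw [h5]
    have : (∑ i ∈ range p, i) * 2 = p * k * 2 := by rw [h2]; ring
    omega
  have h2 : (∑ i ∈ range p, (1 + i * (p * t))) = p + (∑ i ∈ range p, i) * (p * t) := by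
    rw [Finset.sum_add_distrib, Finset.sum_const, ← Finset.sum_mul]
    simp [mul_comm]
  have h3 : (p:ℕ)^2 ∣ (∑ i ∈ range p, i) * (p * t) := by
    rw [hgauss]; exact ⟨((p-1)/2) * t, by ring⟩
  calc (∑ i ∈ range p, (1 + p * t) ^ i) ≡ (∑ i ∈ range p, (1 + i * (p * t))) [MOD p ^ 2] := h1
    _ = p + (∑ i ∈ range p, i) * (p * t) := h2
    _ ≡ p + 0 [MOD p ^ 2] := Nat.ModEq.add_left _ ((Nat.modEq_zero_iff_dvd).mpr h3)
    _ = p := by ring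

lemma nt_sigma {p : ℕ} (hp : p.Prime) (hodd : Odd p) {r : ℕ} (hr : r ≡ 1 [MOD p]) :
    ∃ u, (∑ i ∈ range p, r ^ i) = p * u ∧ ¬ p ∣ u := by
  have hp1 : 1 < p := hp.one_lt
  obtain ⟨t, ht⟩ : ∃ t, r = 1 + p * t := by
    have h := Nat.ModEq.symm hr
    have : r % p = 1 % p := hr
    have h1p : 1 % p = 1 := Nat.mod_eq_of_lt hp1
    have := Nat.div_add_mod r p
    exact ⟨r / p, by omega⟩
  subst ht
  have hs := nt_sum_sq hp hodd t
  have hps : p ∣ (∑ i ∈ range p, (1 + p * t) ^ i) := by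
    have : p ∣ p ^ 2 := ⟨p, (sq p)⟩
    have h' := (Nat.ModEq.of_dvd this hs)
    exact (Nat.modEq_zero_iff_dvd).mp (h'.trans (Nat.modEq_zero_iff_dvd.mpr (dvd_refl p)))
  obtain ⟨u, hu⟩ := hps
  refine ⟨u, hu, ?_⟩
  intro hdvd
  obtain ⟨v, hv⟩ := hdvd
  rw [hu, hv] at hs
  -- p * (p * v) ≡ p [MOD p^2] : contradiction since p^2 ∣ p*(p*v) and p < p^2
  have hdvd2 : (p:ℕ)^2 ∣ p * (p * v) := ⟨v, by ring⟩
  have : (0:ℕ) ≡ p [MOD p^2] := (Nat.modEq_zero_iff_dvd.mpr hdvd2).symm.trans hs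
  have hp2 : p % p^2 = p := Nat.mod_eq_of_lt (by nlinarith)
  have : 0 % p^2 = p % p^2 := this
  simp [hp2] at this
  omega

lemma nt_main {p : ℕ} (hp : p.Prime) (hodd : Odd p) {m K r f : ℕ}
    (h1 : r ^ p ^ K ≡ 1 [MOD p ^ m]) (h2 : p ^ m ∣ f * ∑ i ∈ range p, r ^ i) :
    p ^ m ∣ f * p := by
  rcases Nat.lt_or_ge m 2 with hm | hm
  · -- m ≤ 1
    have : p ^ m ∣ p := by
      interval_cases m
      · simp
      · simp
    exact this.trans (dvd_mul_left p f)
  · -- m ≥ 2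
    have hrp : r ≡ 1 [MOD p] := by
      have hdvd : p ∣ p ^ m := dvd_pow_self p (by omega)
      have h1' : r ^ p ^ K ≡ 1 [MOD p] := Nat.ModEq.of_dvd hdvd h1
      have hfe : r ^ p ^ K ≡ r [MOD p] := by
        haveI : Fact p.Prime := ⟨hp⟩
        have h := ZMod.pow_card_pow (n := K) (r : ZMod p)
        rw [← ZMod.natCast_eq_natCast_iff]
        push_cast
        exact h
      exact (hfe.symm.trans h1')
    obtain ⟨u, hu, hnd⟩ := nt_sigma hp hodd hrp
    rw [hu] at h2
    have h2' : p ^ m ∣ (f * p) * u := by rw [show f * (p * u) = (f * p) * u by ring] at h2; exact h2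
    have hcop : Nat.Coprime (p ^ m) u := Nat.Coprime.pow_left _ ((Nat.Prime.coprime_iff_not_dvd hp).mpr hnd)
    exact hcop.dvd_of_dvd_mul_right h2'




lemma comm_mul_right {G : Type*} [Group G] (x b c : G) : ⁅x, b * c⁆ = ⁅x, b⁆ * (b * ⁅x, c⁆ * b⁻¹) := by
  simp only [commutatorElement_def]
  group

lemma comm_pow_prod {G : Type*} [Group G] (x a : G) (n : ℕ) :
    ⁅x, a ^ n⁆ = (((List.range n).map (fun i => a ^ i * ⁅x, a⁆ * (a ^ i)⁻¹)).prod) := by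
  induction n with
  | zero => simp
  | succ n ih =>
    rw [pow_succ', comm_mul_right, ih, List.range_succ_eq_map]
    have hmap : (List.range n).map ((fun i => a ^ i * ⁅x, a⁆ * (a ^ i)⁻¹) ∘ Nat.succ)
        = (List.range n).map ((fun g => a * g * a⁻¹) ∘ (fun i => a ^ i * ⁅x, a⁆ * (a ^ i)⁻¹)) := by
      apply List.map_congr_left
      intro i _
      simp only [Function.comp_apply, pow_succ']
      group
    have hconj : ((List.range n).map ((fun g => a * g * a⁻¹) ∘ (fun i => a ^ i * ⁅x, a⁆ * (a ^ i)⁻¹))).prod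
        = a * ((List.range n).map (fun i => a ^ i * ⁅x, a⁆ * (a ^ i)⁻¹)).prod * a⁻¹ := by
      rw [← List.map_map]
      exact List.prod_hom _ (MulAut.conj a).toMonoidHom
    rw [List.map_cons, List.prod_cons, List.map_map, hmap, hconj]
    simp

lemma list_pow_sum {M : Type*} [Monoid M] (c : M) (l : List ℕ) :
    (l.map fun e => c ^ e).prod = c ^ l.sum := by
  induction l with
  | nil => simp
  | cons h t ih => simp [ih, pow_add]

lemma list_range_sum_eq (n : ℕ) (f : ℕ → ℕ) :
    ((List.range n).map f).sum = ∑ i ∈ range n, f i := by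
  induction n with
  | zero => simp
  | succ n ih => rw [List.range_succ, Finset.sum_range_succ, List.map_append, List.sum_append, ih]; simp




lemma core_lemma {p : ℕ} [Fact p.Prime] {G : Type*} [Group G] [Finite G] (hodd : Odd p) (hG : IsPGroup p G) (hcyc : IsCyclic (commutator G))
    {x a : G} (h : ⁅x, a ^ p⁆ = 1) : ⁅x, a⁆ ^ p = 1 := by
  classical
  set N := commutator G with hN
  have hw : ⁅x, a⁆ ∈ N := commutator_mem_commutator (mem_top x) (mem_top a)
  set wN : N := ⟨⁅x, a⁆, hw⟩ with hwN
  -- generator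
  obtain ⟨c, hc⟩ := IsCyclic.exists_generator (α := N)
  have hpowers : ∀ y : N, ∃ m : ℕ, c ^ m = y := by
    intro y
    have := (mem_powers_iff_mem_zpowers (x := c) (y := y)).mpr (hc y)
    exact (Submonoid.mem_powers_iff y c).mp this
  obtain ⟨f, hf⟩ := hpowers wN
  obtain ⟨r, hr⟩ := hpowers (MulAut.conjNormal a c)
  -- conj of powers of c
  have hconj_c : ∀ i : ℕ, MulAut.conjNormal (a ^ i) c = c ^ (r ^ i) := by
    intro i
    induction i with
    | zero => simp
    | succ i ih =>
      rw [pow_succ', map_mul]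
      show MulAut.conjNormal a (MulAut.conjNormal (a ^ i) c) = _
      rw [ih, map_pow, ← hr, ← pow_mul, pow_succ']
  have hterm : ∀ i : ℕ, a ^ i * ⁅x, a⁆ * (a ^ i)⁻¹ = ((c ^ (f * r ^ i) : N) : G) := by
    intro i
    have h1 : MulAut.conjNormal (a ^ i) wN = c ^ (f * r ^ i) := by
      rw [← hf, map_pow, hconj_c, ← pow_mul, mul_comm (r ^ i) f]
    calc a ^ i * ⁅x, a⁆ * (a ^ i)⁻¹ = ((MulAut.conjNormal (a ^ i) wN : N) : G) := by
          rw [MulAut.conjNormal_apply]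
      _ = ((c ^ (f * r ^ i) : N) : G) := by rw [h1]
  -- product equals c ^ (sum)
  have hprodN : (c : G) ^ (∑ i ∈ range p, f * r ^ i) = 1 := by
    have h2 : ((List.range p).map (fun i => a ^ i * ⁅x, a⁆ * (a ^ i)⁻¹)).prod = 1 := by
      rw [← comm_pow_prod x a p, h]
    have h3 : (List.range p).map (fun i => a ^ i * ⁅x, a⁆ * (a ^ i)⁻¹)
        = (List.range p).map (fun i => ((c : G)) ^ (f * r ^ i)) := by
      apply List.map_congr_left
      intro i _
      rw [hterm i]
      push_cast
      rfl
    rw [h3] at h2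
    have h4 : (List.range p).map (fun i => ((c : G)) ^ (f * r ^ i))
        = ((List.range p).map (fun i => f * r ^ i)).map (fun e => ((c : G)) ^ e) := by
      rw [List.map_map]; rfl
    rw [h4, list_pow_sum, list_range_sum_eq] at h2
    exact h2
  -- orders
  obtain ⟨k0, hk0⟩ := (hG.to_subgroup N) c
  obtain ⟨m, hmle, hm⟩ := (Nat.dvd_prime_pow Fact.out).mp (orderOf_dvd_of_pow_eq_one hk0)
  obtain ⟨K, hK⟩ := hG a
  -- r ^ p ^ K ≡ 1 mod p^m
  have hrK : r ^ p ^ K ≡ 1 [MOD p ^ m] := by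
    have h5 : c ^ (r ^ p ^ K) = c ^ 1 := by
      rw [pow_one, ← hconj_c (p ^ K), hK, map_one]
      rfl
    have := pow_eq_pow_iff_modEq.mp h5
    rwa [hm] at this
  -- p^m ∣ f * sigma
  have hdvd : p ^ m ∣ f * ∑ i ∈ range p, r ^ i := by
    have h6 : c ^ (∑ i ∈ range p, f * r ^ i) = 1 := by
      have : ((c ^ (∑ i ∈ range p, f * r ^ i) : N) : G) = ((1 : N) : G) := by
        push_cast
        rw [hprodN]
      exact Subtype.ext (by simpa using this)
    have h7 := orderOf_dvd_of_pow_eq_one h6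
    rw [hm, ← Finset.mul_sum] at h7
    exact h7
  have hfin := nt_main (Fact.out) hodd hrK hdvd
  -- conclude
  have h8 : c ^ (f * p) = 1 := by
    rw [← hm] at hfin
    exact orderOf_dvd_iff_pow_eq_one.mp hfin
  have h9 : wN ^ p = 1 := by rw [← hf, ← pow_mul, h8]
  have := congrArg (Subtype.val) h9
  simpa using this




lemma mem_centralizer_subgroup_iff {G : Type*} [Group G] {S : Subgroup G} {y : G} :
    y ∈ centralizer (S : Set G) ↔ S ≤ centralizer {y} := by
  constructor
  · intro h z hz
    rw [mem_centralizer_singleton_iff]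
    exact (mem_centralizer_iff.mp h z hz)
  · intro h
    rw [mem_centralizer_iff]
    intro z hz
    exact (mem_centralizer_singleton_iff.mp (h hz))

lemma mem_centralizer_sup_iff {G : Type*} [Group G] {A : Subgroup G} {a y : G} :
    y ∈ centralizer ((A ⊔ zpowers a : Subgroup G) : Set G)
      ↔ y ∈ centralizer (A : Set G) ∧ a * y = y * a := by
  rw [mem_centralizer_subgroup_iff, sup_le_iff, ← mem_centralizer_subgroup_iff, zpowers_le,
    mem_centralizer_singleton_iff]

lemma card_omega_le {p : ℕ} {G : Type*} [Group G] [Finite G] (hcyc : IsCyclic (commutator G)) (hp0 : 0 < p) :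
    Nat.card {w : (commutator G) // w ^ p = 1} ≤ p := by
  classical
  haveI := Fintype.ofFinite (commutator G)
  haveI := hcyc
  rw [Nat.card_eq_fintype_card, Fintype.card_subtype]
  exact IsCyclic.card_pow_eq_one_le hp0

lemma lemU {p : ℕ} [Fact p.Prime] {G : Type*} [Group G] [Finite G] (hodd : Odd p) (hG : IsPGroup p G) (hcyc : IsCyclic (commutator G))
    {A : Subgroup G} {a : G} (ha : a ^ p ∈ A) :
    Nat.card (centralizer (A : Set G)) ≤
      p * Nat.card (centralizer ((A ⊔ zpowers a : Subgroup G) : Set G)) := by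
  classical
  set E := centralizer (A : Set G) with hE
  set D := centralizer ((A ⊔ zpowers a : Subgroup G) : Set G) with hD
  have hDE : D ≤ E := centralizer_le (by exact_mod_cast SetLike.coe_subset_coe.mpr le_sup_left)
  set D' : Subgroup E := D.subgroupOf E with hD'
  -- the function to Ω
  have hcomm : ∀ x : E, ⁅(x : G), a ^ p⁆ = 1 := by
    intro x
    have := (mem_centralizer_iff.mp x.2) (a ^ p) ha
    rw [commutatorElement_eq_one_iff_mul_comm]
    exact this.symm
  set F : E → {w : (commutator G) // w ^ p = 1} := fun x =>
    ⟨⟨⁅(x : G), a⁆, commutator_mem_commutator (mem_top _) (mem_top _)⟩, by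
      apply Subtype.ext
      push_cast
      exact core_lemma hodd hG hcyc (hcomm x)⟩ with hF
  -- F descends to the quotient and is injective there
  have hfiber : ∀ x y : E, F x = F y ↔ (x : G) * a * (x : G)⁻¹ = (y : G) * a * (y : G)⁻¹ := by
    intro x y
    constructor
    · intro hxy
      have : ⁅(x : G), a⁆ = ⁅(y : G), a⁆ := by
        have := congrArg (fun w => ((w : {w : (commutator G) // w ^ p = 1}).1 : G)) hxy
        simpa [hF] using this
      simpa only [commutatorElement_def, mul_left_inj] using this
    · intro hxy
      apply Subtype.ext; apply Subtype.ext
      simp only [hF, commutatorElement_def]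
      rw [hxy]
  have hwd : ∀ x y : ↥E, (QuotientGroup.leftRel D') x y → F x = F y := by
    intro x y hrel
    rw [QuotientGroup.leftRel_apply] at hrel
    have hmem : ((x⁻¹ * y : E) : G) ∈ D := hrel
    have hcomm2 : a * ((x⁻¹ * y : E) : G) = ((x⁻¹ * y : E) : G) * a :=
      (mem_centralizer_sup_iff.mp hmem).2
    rw [hfiber]
    have : (x : G)⁻¹ * y * a = a * ((x : G)⁻¹ * y) := by
      push_cast at hcomm2; rw [hcomm2]
    -- derive x a x⁻¹ = y a y⁻¹
    have h2 : (y : G) * a = (x : G) * a * (x : G)⁻¹ * (y : G) := by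
      have := congrArg (fun z => (x : G) * z) this
      simp only [← mul_assoc] at this
      simpa [mul_assoc] using this
    rw [h2]; group
  set Fq : (E ⧸ D') → {w : (commutator G) // w ^ p = 1} :=
    Quotient.lift F hwd with hFq
  have hinj : Function.Injective Fq := by
    intro q1 q2
    obtain ⟨x, rfl⟩ := QuotientGroup.mk_surjective q1
    obtain ⟨y, rfl⟩ := QuotientGroup.mk_surjective q2
    intro heq
    have hFeq : F x = F y := heq
    rw [hfiber] at hFeq
    rw [QuotientGroup.eq]
    show ((x⁻¹ * y : E) : G) ∈ D
    rw [mem_centralizer_sup_iff]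
    constructor
    · exact (x⁻¹ * y : E).2
    · push_cast
      -- from x a x⁻¹ = y a y⁻¹
      have h2 : a * ((x:G)⁻¹ * y) = (x:G)⁻¹ * y * a := by
        have := congrArg (fun z => (x : G)⁻¹ * z * (y : G)) hFeq
        simp only [mul_assoc, inv_mul_cancel_left] at this ⊢
        simpa using this
      simpa [mul_assoc] using h2
  -- counting
  have hcount : Nat.card E = Nat.card (E ⧸ D') * Nat.card D :=
    by rw [card_eq_card_quotient_mul_card_subgroup D',
      Nat.card_congr (subgroupOfEquivOfLe hDE).toEquiv]
  have hle : Nat.card (E ⧸ D') ≤ p :=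
    le_trans (Nat.card_le_card_of_injective Fq hinj) (card_omega_le hcyc (Fact.out : p.Prime).pos)
  rw [hcount]
  exact Nat.mul_le_mul_right _ hle



-- subgroup equality from le and card
lemma subgroup_eq_of_le_of_card_le {G : Type*} [Group G] [Finite G] {A B : Subgroup G} (h : A ≤ B)
    (hc : Nat.card B ≤ Nat.card A) : A = B := by
  have hfin : (B : Set G).Finite := Set.toFinite _
  have hA : Nat.card A = (A : Set G).ncard := Nat.card_coe_set_eq _
  have hB : Nat.card B = (B : Set G).ncard := Nat.card_coe_set_eq _
  have := Set.eq_of_subset_of_ncard_le (h : (A : Set G) ⊆ B) (by omega) hfin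
  exact SetLike.coe_injective this

lemma card_lt_of_lt {G : Type*} [Group G] [Finite G] {A B : Subgroup G} (h : A < B) : Nat.card A < Nat.card B := by
  rcases lt_or_ge (Nat.card A) (Nat.card B) with h' | h'
  · exact h'
  · exact absurd (subgroup_eq_of_le_of_card_le h.le h') h.ne

lemma pm_lemma {p : ℕ} [Fact p.Prime] {G : Type*} [Group G] [Finite G] {A K : Subgroup G} (hAK : A ≤ K) (hcard : Nat.card K = p * Nat.card A)
    {a : G} (haK : a ∈ K) (haA : a ∉ A) {k : ℕ} (hak : a ^ p ^ k = 1) :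
    a ^ p ∈ A ∧ A ⊔ zpowers a = K := by
  classical
  have hp : p.Prime := Fact.out
  set aK : ↥K := ⟨a, haK⟩ with haKdef
  set A' : Subgroup ↥K := A.subgroupOf K with hA'
  have hcardA' : Nat.card A' = Nat.card A := Nat.card_congr (subgroupOfEquivOfLe hAK).toEquiv
  have hApos : 0 < Nat.card A := Nat.card_pos
  have hindex : A'.index = p := by
    have h1 : A'.index * Nat.card A' = Nat.card K := Subgroup.index_mul_card A'
    rw [hcardA', hcard] at h1
    exact Nat.eq_of_mul_eq_mul_right hApos (by omega)
  have hQcard : Nat.card (↥K ⧸ A') = p := by rw [← hindex]; rfl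
  -- minimal period
  have hex : ∃ n, 0 < n ∧ a ^ n ∈ A := ⟨p ^ k, pow_pos hp.pos k, by rw [hak]; exact A.one_mem⟩
  set d := Nat.find hex with hd
  obtain ⟨hdpos, hdA⟩ := Nat.find_spec hex
  have hmin : ∀ m, m < d → ¬(0 < m ∧ a ^ m ∈ A) := fun m hm => Nat.find_min hex hm
  have hdvd : ∀ n, a ^ n ∈ A → d ∣ n := by
    intro n hn
    have hmod : a ^ (n % d) ∈ A := by
      have : a ^ n = a ^ (d * (n / d)) * a ^ (n % d) := by
        rw [← pow_add, Nat.div_add_mod]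
      have h2 : a ^ (n % d) = (a ^ (d * (n / d)))⁻¹ * a ^ n := by
        rw [this]; group
      rw [h2]
      exact A.mul_mem (A.inv_mem (by rw [pow_mul]; exact A.pow_mem hdA _)) hn
    by_contra hnd
    have hne : n % d ≠ 0 := fun h0 => hnd (Nat.dvd_of_mod_eq_zero h0)
    exact hmin (n % d) (Nat.mod_lt n hdpos) ⟨Nat.pos_of_ne_zero hne, hmod⟩
  have hdp : d ∣ p ^ k := hdvd _ (by rw [hak]; exact A.one_mem)
  -- d ≤ p via injection Fin d → quotient
  have hkey : ∀ i j : ℕ, i ≤ j → ((aK ^ i)⁻¹ * aK ^ j : ↥K) ∈ A' → a ^ (j - i) ∈ A := by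
    intro i j hle hmem
    have hg : ((aK ^ i)⁻¹ * aK ^ j : ↥K) = aK ^ (j - i) := by
      have : aK ^ j = aK ^ i * aK ^ (j - i) := by
        rw [← pow_add]
        congr 1
        omega
      rw [this]
      group
    rw [hg] at hmem
    have : ((aK ^ (j - i) : ↥K) : G) ∈ A := hmem
    simpa using this
  have hinj : Function.Injective (fun i : Fin d => (QuotientGroup.mk (aK ^ (i : ℕ)) : ↥K ⧸ A')) := by
    intro i j hij
    rw [QuotientGroup.eq] at hij
    apply Fin.ext
    rcases le_or_gt (i:ℕ) (j:ℕ) with hle | hlt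
    · have hA := hkey _ _ hle hij
      have hd2 := hdvd _ hA
      have : (j:ℕ) - (i:ℕ) = 0 := Nat.eq_zero_of_dvd_of_lt hd2 (by omega) 
      omega
    · have hij' : ((aK ^ (j:ℕ))⁻¹ * aK ^ (i:ℕ) : ↥K) ∈ A' := by
        have := A'.inv_mem hij
        simpa [mul_comm] using this
      have hA := hkey _ _ hlt.le hij'
      have hd2 := hdvd _ hA
      have : (i:ℕ) - (j:ℕ) = 0 := Nat.eq_zero_of_dvd_of_lt hd2 (by omega) 
      omega
  have hdlep : d ≤ p := by
    have := Nat.card_le_card_of_injective _ hinj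
    simpa [hQcard] using this
  have hdne1 : d ≠ 1 := by
    intro h1
    have hA1 : a ^ d ∈ A := hdA
    rw [h1, pow_one] at hA1
    exact haA hA1
  -- d = p
  obtain ⟨j, hjle, hjd⟩ := (Nat.dvd_prime_pow hp).mp hdp
  have hj1 : j = 1 := by
    rcases Nat.lt_or_ge j 1 with h0 | h1
    · interval_cases j
      · simp at hjd; omega
    · have : p ^ 1 ≤ p ^ j := Nat.pow_le_pow_right hp.pos h1
      have : j ≤ 1 := by
        by_contra hgt
        have : p ^ 2 ≤ p ^ j := Nat.pow_le_pow_right hp.pos (by omega)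
        have hplt : p < p ^ 2 := by nlinarith [hp.two_le]
        omega
      omega
  have hdp' : d = p := by rw [hjd, hj1, pow_one]
  have hpA : a ^ p ∈ A := by rw [← hdp']; exact hdA
  refine ⟨hpA, ?_⟩
  -- join = K
  set J := A ⊔ zpowers a with hJ
  have hJK : J ≤ K := sup_le hAK ((zpowers_le).mpr haK)
  have hAJ : A ≤ J := le_sup_left
  have haJ : a ∈ J := (le_sup_right : zpowers a ≤ J) (mem_zpowers a)
  have hAJne : A ≠ J := fun h => haA (h ▸ haJ)
  obtain ⟨t, ht⟩ : Nat.card A ∣ Nat.card J := card_dvd_of_le hAJ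
  have hJdK : Nat.card J ∣ Nat.card K := card_dvd_of_le hJK
  rw [hcard, ht] at hJdK
  have htdp : t ∣ p := by
    rcases hJdK with ⟨s, hs⟩
    have hs' : Nat.card ↥A * p = Nat.card ↥A * (t * s) := by rw [← mul_assoc, ← hs, mul_comm p]
    have : p = t * s := Nat.eq_of_mul_eq_mul_left hApos hs'
    exact ⟨s, this⟩
  rcases (Nat.Prime.eq_one_or_self_of_dvd hp t htdp) with ht1 | htp
  · exfalso
    rw [ht1, mul_one] at ht
    exact hAJne (subgroup_eq_of_le_of_card_le hAJ (le_of_eq ht))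
  · apply subgroup_eq_of_le_of_card_le hJK
    rw [hcard, ht, htp, mul_comm]

lemma step_lemma {p : ℕ} [Fact p.Prime] {G : Type*} [Group G] [Finite G] (hG : IsPGroup p G) {A B : Subgroup G} (h : A < B) :
    ∃ a : G, a ∉ A ∧ a ^ p ∈ A ∧
      Nat.card (A ⊔ zpowers a : Subgroup G) = p * Nat.card A ∧
      (A ⊔ zpowers a : Subgroup G) ≤ B := by
  have hp : p.Prime := Fact.out
  obtain ⟨n, hn⟩ := (hG.to_subgroup A).exists_card_eq
  obtain ⟨m, hm⟩ := (hG.to_subgroup B).exists_card_eq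
  have hnm : n < m := by
    have := card_lt_of_lt h
    rw [hn, hm] at this
    exact (Nat.pow_lt_pow_iff_right hp.one_lt).mp this
  set A' : Subgroup ↥B := A.subgroupOf B with hA'
  have hcardA' : Nat.card A' = p ^ n := by
    rw [← hn]; exact Nat.card_congr (subgroupOfEquivOfLe h.le).toEquiv
  have hdvd : p ^ (n + 1) ∣ Nat.card ↥B := by
    rw [hm]; exact pow_dvd_pow _ (by omega)
  obtain ⟨K', hK'card, hK'le⟩ := Sylow.exists_subgroup_card_pow_succ hdvd hcardA'
  set K : Subgroup G := K'.map B.subtype with hK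
  have hcardK : Nat.card K = p ^ (n + 1) := by
    rw [← hK'card]
    exact (Nat.card_congr (K'.equivMapOfInjective B.subtype B.subtype_injective).toEquiv).symm
  have hAK : A ≤ K := by
    have h1 : (A.subgroupOf B).map B.subtype ≤ K := map_mono hK'le
    rwa [subgroupOf_map_subtype, inf_of_le_left h.le] at h1
  have hKB : K ≤ B := map_subtype_le K'
  have hAneK : A ≠ K := by
    intro he
    rw [← he, hn] at hcardK
    have := Nat.pow_right_injective hp.two_le hcardK
    omega
  obtain ⟨a, haK, haA⟩ := SetLike.exists_of_lt (lt_of_le_of_ne hAK hAneK)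
  obtain ⟨k, hak⟩ := hG a
  obtain ⟨hpA, hjoin⟩ := pm_lemma hAK (by rw [hcardK, hn, pow_succ']) haK haA hak
  refine ⟨a, haA, hpA, ?_, ?_⟩
  · rw [hjoin, hcardK, hn, pow_succ']
  · rw [hjoin]; exact hKB

lemma mono_aux {p : ℕ} [Fact p.Prime] {G : Type*} [Group G] [Finite G] (hodd : Odd p) (hG : IsPGroup p G) (hcyc : IsCyclic (commutator G)) :
    ∀ n : ℕ, ∀ A B : Subgroup G, A ≤ B → Nat.card B - Nat.card A = n →
      Nat.card A * Nat.card (centralizer (A : Set G)) ≤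
        Nat.card B * Nat.card (centralizer (B : Set G)) := by
  intro n
  induction n using Nat.strong_induction_on with
  | _ n ih =>
    intro A B hAB hn
    rcases eq_or_lt_of_le hAB with rfl | hlt
    · exact le_rfl
    · obtain ⟨a, haA, hap, hcard, hle⟩ := step_lemma hG hlt
      set A2 : Subgroup G := A ⊔ zpowers a with hA2
      have hp : p.Prime := Fact.out
      have h1 : Nat.card A * Nat.card (centralizer (A : Set G)) ≤
          Nat.card A2 * Nat.card (centralizer (A2 : Set G)) := by
        calc Nat.card A * Nat.card (centralizer (A : Set G))
            ≤ Nat.card A * (p * Nat.card (centralizer (A2 : Set G))) :=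
              Nat.mul_le_mul_left _ (lemU hodd hG hcyc hap)
          _ = (p * Nat.card A) * Nat.card (centralizer (A2 : Set G)) := by ring
          _ = Nat.card A2 * Nat.card (centralizer (A2 : Set G)) := by rw [hcard]
      have hposA : 0 < Nat.card A := Nat.card_pos
      have hA2gt : Nat.card A < Nat.card A2 := by
        rw [hcard]
        nlinarith [hp.two_le]
      have hA2le : Nat.card A2 ≤ Nat.card B :=
        Nat.le_of_dvd Nat.card_pos (card_dvd_of_le hle)
      have hltn : Nat.card B - Nat.card A2 < n := by omega
      exact le_trans h1 (ih _ hltn A2 B hle rfl)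

lemma mono_lemma {p : ℕ} [Fact p.Prime] {G : Type*} [Group G] [Finite G] (hodd : Odd p) (hG : IsPGroup p G) (hcyc : IsCyclic (commutator G))
    {A B : Subgroup G} (hAB : A ≤ B) :
    Nat.card A * Nat.card (centralizer (A : Set G)) ≤
      Nat.card B * Nat.card (centralizer (B : Set G)) :=
  mono_aux hodd hG hcyc _ A B hAB rfl

lemma main_lemma {p : ℕ} [Fact p.Prime] {G : Type*} [Group G] [Finite G] (hodd : Odd p) (hG : IsPGroup p G) (hcyc : IsCyclic (commutator G))
    {H : Subgroup G} (hZ : center G ≤ H) :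
    Nat.card H * Nat.card (centralizer (H : Set G)) =
      Nat.card G * Nat.card (center G) := by
  have hZG : Nat.card (center G) * Nat.card (centralizer ((center G : Subgroup G) : Set G)) =
      Nat.card G * Nat.card (center G) := by
    rw [centralizer_eq_top_iff_subset.mpr (le_refl (center G : Set G))]
    rw [Nat.card_congr Subgroup.topEquiv.toEquiv, mul_comm]
  have htop : Nat.card (⊤ : Subgroup G) * Nat.card (centralizer ((⊤ : Subgroup G) : Set G)) =
      Nat.card G * Nat.card (center G) := by
    rw [coe_top, centralizer_univ, Nat.card_congr Subgroup.topEquiv.toEquiv]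
  have h1 := mono_lemma hodd hG hcyc hZ
  have h2 := mono_lemma hodd hG hcyc (le_top (a := H))
  rw [hZG] at h1
  rw [htop] at h2
  omega

lemma centralizer_sup_center {G : Type*} [Group G] (H : Subgroup G) :
    centralizer ((H ⊔ center G : Subgroup G) : Set G) = centralizer (H : Set G) := by
  apply le_antisymm
  · exact centralizer_le (SetLike.coe_subset_coe.mpr le_sup_left)
  · rw [le_centralizer_iff]
    exact sup_le (le_centralizer_iff.mp le_rfl) (center_le_centralizer _)

theorem stmt9 {p : ℕ} [Fact p.Prime] (hp : Odd p) {G : Type*} [Group G] [Finite G]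
    (hG : IsPGroup p G) (hcyc : IsCyclic (commutator G)) :
    {K : Subgroup G | ∃ H : Subgroup G, Subgroup.centralizer (H : Set G) = K} =
        {K : Subgroup G | Subgroup.center G ≤ K} ∧
      CD G = {H : Subgroup G | Subgroup.center G ≤ H} := by
  have htop : Nat.card (⊤ : Subgroup G) * Nat.card (centralizer ((⊤ : Subgroup G) : Set G)) =
      Nat.card G * Nat.card (center G) := by
    rw [coe_top, centralizer_univ, Nat.card_congr Subgroup.topEquiv.toEquiv]
  constructor
  · ext K
    simp only [Set.mem_setOf_eq]
    constructor
    · rintro ⟨H, rfl⟩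
      exact center_le_centralizer _
    · intro hZK
      refine ⟨centralizer (K : Set G), ?_⟩
      have hKle : K ≤ centralizer ((centralizer (K : Set G) : Subgroup G) : Set G) :=
        le_centralizer_iff.mp le_rfl
      have h1 := main_lemma hp hG hcyc hZK
      have h2 := main_lemma hp hG hcyc (center_le_centralizer (K : Set G))
      have hCpos : 0 < Nat.card (centralizer (K : Set G)) := Nat.card_pos
      have hcards : Nat.card (centralizer ((centralizer (K : Set G) : Subgroup G) : Set G)) =
          Nat.card K := by
        have h3 : Nat.card (centralizer (K : Set G)) *
            Nat.card (centralizer ((centralizer (K : Set G) : Subgroup G) : Set G)) =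
            Nat.card (centralizer (K : Set G)) * Nat.card K := by
          rw [h2, ← h1]; ring
        exact Nat.eq_of_mul_eq_mul_left hCpos h3
      exact (subgroup_eq_of_le_of_card_le hKle (le_of_eq hcards)).symm
  · have hstar : mStar G = Nat.card G * Nat.card (center G) := by
      apply IsGreatest.csSup_eq
      constructor
      · exact ⟨⊤, htop⟩
      · rintro x ⟨H, rfl⟩
        have := mono_lemma hp hG hcyc (le_top (a := H))
        rw [htop] at this
        exact this
    ext H
    simp only [CD, Set.mem_setOf_eq, hstar]
    constructor
    · intro hH
      have hH' : Nat.card H * Nat.card (centralizer (H : Set G)) =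
          Nat.card G * Nat.card (center G) := hH
      have hjoin := main_lemma hp hG hcyc (le_sup_right (a := H) (b := center G))
      rw [centralizer_sup_center] at hjoin
      have hCpos : 0 < Nat.card (centralizer (H : Set G)) := Nat.card_pos
      have hcards : Nat.card (H ⊔ center G : Subgroup G) ≤ Nat.card H := by
        have h3 : Nat.card (H ⊔ center G : Subgroup G) * Nat.card (centralizer (H : Set G)) =
            Nat.card H * Nat.card (centralizer (H : Set G)) := by
          rw [hjoin]; exact hH'.symm
        exact le_of_eq (Nat.eq_of_mul_eq_mul_right hCpos h3)
      have := subgroup_eq_of_le_of_card_le (le_sup_left : H ≤ H ⊔ center G) hcards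
      rw [this]
      exact le_sup_right
    · intro hZH
      exact main_lemma hp hG hcyc hZH
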